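/- Let k = ℤ/(2) and A = k[X, Y]/(XY(X+Y)). Then A is a weakly Arf ring but A is not strictly closed; that is, the weakly Arf closure A^a equals A while the strict closure A* of A in its integral closure strictly contains A. -/

import Mathlib

open scoped TensorProduct

set_option synthInstance.maxHeartbeats 1000000
set_option maxHeartbeats 2000000

/-- The strict closure of `R` in `S`. -/
def strictClosure (R : Type*) [CommRing R] (S : Type*) [CommRing S] [Algebra R S] : Set S :=
  {α : S | α ⊗ₜ[R] (1 : S) = (1 : S) ⊗ₜ[R] α}

/-- A commutative ring `B` is weakly Arf if whenever `x` is a non-zerodivisor and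
`y/x, z/x` (in the total quotient ring `Q(B)`) are integral over `B`, then `yz/x ∈ B`. -/
def IsWeaklyArf (B : Type*) [CommRing B] : Prop :=
  ∀ (x : nonZeroDivisors B) (y z : B),
    IsIntegral B (IsLocalization.mk' (Localization (nonZeroDivisors B)) y x) →
    IsIntegral B (IsLocalization.mk' (Localization (nonZeroDivisors B)) z x) →
    ∃ b : B, algebraMap B (Localization (nonZeroDivisors B)) b =
      IsLocalization.mk' (Localization (nonZeroDivisors B)) (y * z) x

/-- The ideal `(XY(X+Y))` of `k[X, Y]`, `k = ℤ/(2)`. -/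
noncomputable def Iline : Ideal (MvPolynomial (Fin 2) (ZMod 2)) :=
  Ideal.span {MvPolynomial.X 0 * MvPolynomial.X 1 * (MvPolynomial.X 0 + MvPolynomial.X 1)}

/-- `A = k[X, Y]/(XY(X+Y))` with `k = ℤ/(2)`. -/
def Aline : Type := MvPolynomial (Fin 2) (ZMod 2) ⧸ Iline

noncomputable instance : CommRing Aline :=
  inferInstanceAs (CommRing (MvPolynomial (Fin 2) (ZMod 2) ⧸ Iline))

/-- The image `x` of `X` in `A`. -/
noncomputable def xA : Aline := Ideal.Quotient.mk Iline (MvPolynomial.X 0)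

/-- The image `y` of `Y` in `A`. -/
noncomputable def yA : Aline := Ideal.Quotient.mk Iline (MvPolynomial.X 1)

/-- `Ā = A/xA × A/yA × A/(x+y)A`, the integral closure of `A` in `Q(A)`. -/
noncomputable abbrev Abar : Type :=
  (Aline ⧸ Ideal.span {xA}) × (Aline ⧸ Ideal.span {yA}) × (Aline ⧸ Ideal.span {xA + yA})

/-- The canonical map `A → Ā`. -/
noncomputable def AtoAbar : Aline →+* Abar :=
  (Ideal.Quotient.mk (Ideal.span {xA})).prod
    ((Ideal.Quotient.mk (Ideal.span {yA})).prod (Ideal.Quotient.mk (Ideal.span {xA + yA})))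

open Polynomial MvPolynomial

namespace WA

noncomputable abbrev R2 := MvPolynomial (Fin 2) (ZMod 2)
noncomputable abbrev P1 := Polynomial (ZMod 2)
noncomputable def psi1 : R2 →ₐ[ZMod 2] P1 := MvPolynomial.aeval ![0, Polynomial.X]
noncomputable def psi2 : R2 →ₐ[ZMod 2] P1 := MvPolynomial.aeval ![Polynomial.X, 0]
noncomputable def psi3 : R2 →ₐ[ZMod 2] P1 := MvPolynomial.aeval ![Polynomial.X, Polynomial.X]

lemma finsupp_ext2 (m m' : Fin 2 →₀ ℕ) (h0 : m 0 = m' 0) (h1 : m 1 = m' 1) : m = m' := by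
  ext j
  fin_cases j
  · exact h0
  · exact h1

lemma single0_apply (d : ℕ) : (Finsupp.single (0 : Fin 2) d) 0 = d ∧ (Finsupp.single (0 : Fin 2) d) 1 = 0 :=
  ⟨Finsupp.single_eq_same, Finsupp.single_eq_of_ne (by decide)⟩

lemma single1_apply (d : ℕ) : (Finsupp.single (1 : Fin 2) d) 0 = 0 ∧ (Finsupp.single (1 : Fin 2) d) 1 = d :=
  ⟨Finsupp.single_eq_of_ne (by decide), Finsupp.single_eq_same⟩

lemma eq_single0_iff (m : Fin 2 →₀ ℕ) (d : ℕ) :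
    m = Finsupp.single 0 d ↔ m 0 = d ∧ m 1 = 0 := by
  constructor
  · rintro rfl; exact single0_apply d
  · rintro ⟨h0, h1⟩
    exact finsupp_ext2 _ _ (by rw [h0, (single0_apply d).1]) (by rw [h1, (single0_apply d).2])

lemma eq_single1_iff (m : Fin 2 →₀ ℕ) (d : ℕ) :
    m = Finsupp.single 1 d ↔ m 0 = 0 ∧ m 1 = d := by
  constructor
  · rintro rfl; exact single1_apply d
  · rintro ⟨h0, h1⟩
    exact finsupp_ext2 _ _ (by rw [h0, (single1_apply d).1]) (by rw [h1, (single1_apply d).2])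

lemma eq_zero_iff (m : Fin 2 →₀ ℕ) : m = 0 ↔ m 0 = 0 ∧ m 1 = 0 := by
  constructor
  · rintro rfl; simp
  · rintro ⟨h0, h1⟩; exact finsupp_ext2 _ _ (by simpa) (by simpa)

lemma psi2_monomial (m : Fin 2 →₀ ℕ) (c : ZMod 2) :
    psi2 (MvPolynomial.monomial m c) = Polynomial.C c * (Polynomial.X ^ (m 0) * 0 ^ (m 1)) := by
  rw [psi2, MvPolynomial.aeval_monomial, Finsupp.prod_fintype, Fin.prod_univ_two]
  · simp [Polynomial.algebraMap_eq]
  · intro i; exact pow_zero _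

lemma psi1_monomial (m : Fin 2 →₀ ℕ) (c : ZMod 2) :
    psi1 (MvPolynomial.monomial m c) = Polynomial.C c * (0 ^ (m 0) * Polynomial.X ^ (m 1)) := by
  rw [psi1, MvPolynomial.aeval_monomial, Finsupp.prod_fintype, Fin.prod_univ_two]
  · simp [Polynomial.algebraMap_eq]
  · intro i; exact pow_zero _

lemma psi3_monomial (m : Fin 2 →₀ ℕ) (c : ZMod 2) :
    psi3 (MvPolynomial.monomial m c) = Polynomial.C c * Polynomial.X ^ (m 0 + m 1) := by
  rw [psi3, MvPolynomial.aeval_monomial, Finsupp.prod_fintype, Fin.prod_univ_two]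
  · simp [Polynomial.algebraMap_eq, pow_add]
  · intro i; exact pow_zero _

lemma coeff_psi2 (f : R2) (d : ℕ) :
    (psi2 f).coeff d = MvPolynomial.coeff (Finsupp.single 0 d) f := by
  induction f using MvPolynomial.induction_on' with
  | monomial m c =>
    rw [psi2_monomial, MvPolynomial.coeff_monomial]
    rcases Nat.eq_zero_or_pos (m 1) with h1 | h1
    · rw [h1, pow_zero, mul_one, Polynomial.coeff_C_mul, Polynomial.coeff_X_pow]
      have e : (m = Finsupp.single 0 d) ↔ (d = m 0) := by
        rw [eq_single0_iff]; omega
      by_cases h : d = m 0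
      · rw [if_pos h, if_pos (e.2 h), mul_one]
      · rw [if_neg h, if_neg (fun hh => h (e.1 hh)), mul_zero]
  
    · rw [zero_pow (by omega), mul_zero, mul_zero, Polynomial.coeff_zero]
      rw [if_neg (fun hh => by rw [eq_single0_iff] at hh; omega)]
  | add p q hp hq => simp [map_add, hp, hq, MvPolynomial.coeff_add]

lemma coeff_psi1 (f : R2) (d : ℕ) :
    (psi1 f).coeff d = MvPolynomial.coeff (Finsupp.single 1 d) f := by
  induction f using MvPolynomial.induction_on' with
  | monomial m c =>
    rw [psi1_monomial, MvPolynomial.coeff_monomial]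
    rcases Nat.eq_zero_or_pos (m 0) with h1 | h1
    · rw [h1, pow_zero, one_mul, Polynomial.coeff_C_mul, Polynomial.coeff_X_pow]
      have e : (m = Finsupp.single 1 d) ↔ (d = m 1) := by
        rw [eq_single1_iff]; omega
      by_cases h : d = m 1
      · rw [if_pos h, if_pos (e.2 h), mul_one]
      · rw [if_neg h, if_neg (fun hh => h (e.1 hh)), mul_zero]
    · rw [zero_pow (by omega), zero_mul, mul_zero, Polynomial.coeff_zero]
      rw [if_neg (fun hh => by rw [eq_single1_iff] at hh; omega)]
  | add p q hp hq => simp [map_add, hp, hq, MvPolynomial.coeff_add]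

lemma coeff_psi3_zero (f : R2) :
    (psi3 f).coeff 0 = MvPolynomial.coeff 0 f := by
  induction f using MvPolynomial.induction_on' with
  | monomial m c =>
    rw [psi3_monomial, MvPolynomial.coeff_monomial, Polynomial.coeff_C_mul,
      Polynomial.coeff_X_pow]
    by_cases h : m 0 + m 1 = 0
    · rw [if_pos (by omega), if_pos ((eq_zero_iff m).2 (by omega)), mul_one]
    · rw [if_neg (by omega), if_neg (fun hh => by rw [eq_zero_iff] at hh; omega), mul_zero]
  | add p q hp hq => simp [map_add, hp, hq, MvPolynomial.coeff_add]

lemma coeff_psi3_one (f : R2) :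
    (psi3 f).coeff 1 =
      MvPolynomial.coeff (Finsupp.single 0 1) f + MvPolynomial.coeff (Finsupp.single 1 1) f := by
  induction f using MvPolynomial.induction_on' with
  | monomial m c =>
    rw [psi3_monomial, Polynomial.coeff_C_mul, Polynomial.coeff_X_pow,
      MvPolynomial.coeff_monomial, MvPolynomial.coeff_monomial]
    by_cases h : m 0 + m 1 = 1
    · rw [if_pos (by omega)]
      rcases Nat.eq_zero_or_pos (m 0) with h0 | h0
      · rw [if_neg (fun hh => by rw [eq_single0_iff] at hh; omega),
          if_pos ((eq_single1_iff m 1).2 (by omega)), mul_one, zero_add]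
      · rw [if_pos ((eq_single0_iff m 1).2 (by omega)),
          if_neg (fun hh => by rw [eq_single1_iff] at hh; omega), mul_one, add_zero]
    · rw [if_neg (by omega), if_neg (fun hh => by rw [eq_single0_iff] at hh; omega),
        if_neg (fun hh => by rw [eq_single1_iff] at hh; omega), mul_zero, add_zero]
  | add p q hp hq =>
    simp only [map_add, Polynomial.coeff_add, MvPolynomial.coeff_add, hp, hq]; ring

lemma coeff_psi1_zero (f : R2) : (psi1 f).coeff 0 = MvPolynomial.coeff 0 f := by
  rw [coeff_psi1, Finsupp.single_zero]
lemma coeff_psi2_zero (f : R2) : (psi2 f).coeff 0 = MvPolynomial.coeff 0 f := by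
  rw [coeff_psi2, Finsupp.single_zero]

/-- The key fact C1: the sum of the degree-1 coefficients of the three branch images vanishes. -/
lemma coeff_one_sum (f : R2) :
    (psi1 f).coeff 1 + (psi2 f).coeff 1 + (psi3 f).coeff 1 = 0 := by
  rw [coeff_psi1, coeff_psi2, coeff_psi3_one]
  have h2 : (2 : ZMod 2) = 0 := rfl
  ring_nf
  rw [h2, mul_zero, mul_zero, add_zero]



lemma X_dvd_of_coeff (i : Fin 2) (f : R2)
    (h : ∀ m : Fin 2 →₀ ℕ, m i = 0 → MvPolynomial.coeff m f = 0) :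
    MvPolynomial.X i ∣ f := by
  rw [MvPolynomial.X_dvd_iff_modMonomial_eq_zero]
  ext m
  rw [MvPolynomial.coeff_zero]
  by_cases hm : Finsupp.single i 1 ≤ m
  · exact MvPolynomial.coeff_modMonomial_of_le f hm
  · rw [MvPolynomial.coeff_modMonomial_of_not_le f hm]
    apply h
    by_contra hne
    exact hm (by rwa [Finsupp.single_le_iff, Nat.one_le_iff_ne_zero])

lemma X1_dvd_of_psi2 (f : R2) (h : psi2 f = 0) : MvPolynomial.X 1 ∣ f := by
  apply X_dvd_of_coeff
  intro m hm
  have : m = Finsupp.single 0 (m 0) := (eq_single0_iff m (m 0)).2 ⟨rfl, hm⟩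
  rw [this, ← coeff_psi2, h, Polynomial.coeff_zero]

lemma X0_dvd_of_psi1 (f : R2) (h : psi1 f = 0) : MvPolynomial.X 0 ∣ f := by
  apply X_dvd_of_coeff
  intro m hm
  have : m = Finsupp.single 1 (m 1) := (eq_single1_iff m (m 1)).2 ⟨hm, rfl⟩
  rw [this, ← coeff_psi1, h, Polynomial.coeff_zero]

noncomputable def tau : R2 →ₐ[ZMod 2] R2 :=
  MvPolynomial.aeval ![MvPolynomial.X 0, MvPolynomial.X 0 + MvPolynomial.X 1]

@[simp] lemma tau_X0 : tau (MvPolynomial.X 0) = MvPolynomial.X 0 := by simp [tau]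
@[simp] lemma tau_X1 : tau (MvPolynomial.X 1) = MvPolynomial.X 0 + MvPolynomial.X 1 := by
  simp [tau]

lemma tau_tau (f : R2) : tau (tau f) = f := by
  have : tau.comp tau = AlgHom.id _ _ := by
    apply MvPolynomial.algHom_ext
    intro i
    fin_cases i
    · show tau (tau (MvPolynomial.X 0)) = MvPolynomial.X 0
      rw [tau_X0, tau_X0]
    · show tau (tau (MvPolynomial.X 1)) = MvPolynomial.X 1
      rw [tau_X1, map_add, tau_X0, tau_X1, ← add_assoc, CharTwo.add_self_eq_zero, zero_add]
  calc tau (tau f) = (tau.comp tau) f := rfl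
    _ = f := by rw [this]; rfl

lemma psi3_eq_psi2_tau (f : R2) : psi3 f = psi2 (tau f) := by
  have : psi3 = psi2.comp tau := by
    apply MvPolynomial.algHom_ext
    intro i
    fin_cases i <;> simp [psi2, psi3, tau, CharTwo.add_self_eq_zero]
  rw [this]; rfl

lemma X01_dvd_of_psi3 (f : R2) (h : psi3 f = 0) :
    (MvPolynomial.X 0 + MvPolynomial.X 1 : R2) ∣ f := by
  rw [psi3_eq_psi2_tau] at h
  obtain ⟨g, hg⟩ := X1_dvd_of_psi2 _ h
  refine ⟨tau g, ?_⟩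
  calc f = tau (tau f) := (tau_tau f).symm
    _ = tau (MvPolynomial.X 1 * g) := by rw [hg]
    _ = (MvPolynomial.X 0 + MvPolynomial.X 1) * tau g := by rw [map_mul, tau_X1]



@[simp] lemma psi1_X0 : psi1 (MvPolynomial.X 0) = 0 := by simp [psi1]
@[simp] lemma psi1_X1 : psi1 (MvPolynomial.X 1) = Polynomial.X := by simp [psi1]
@[simp] lemma psi2_X0 : psi2 (MvPolynomial.X 0) = Polynomial.X := by simp [psi2]
@[simp] lemma psi2_X1 : psi2 (MvPolynomial.X 1) = 0 := by simp [psi2]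
@[simp] lemma psi3_X0 : psi3 (MvPolynomial.X 0) = Polynomial.X := by simp [psi3]
@[simp] lemma psi3_X1 : psi3 (MvPolynomial.X 1) = Polynomial.X := by simp [psi3]

noncomputable def G : R2 :=
  MvPolynomial.X 0 * MvPolynomial.X 1 * (MvPolynomial.X 0 + MvPolynomial.X 1)

lemma Iline_eq : Iline = Ideal.span {G} := rfl

lemma psi1_G : psi1 G = 0 := by simp [G]
lemma psi2_G : psi2 G = 0 := by simp [G]
lemma psi3_G : psi3 G = 0 := by
  have h : (Polynomial.X + Polynomial.X : P1) = 0 := CharTwo.add_self_eq_zero _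
  simp [G, h]

lemma psi1_Iline {f : R2} (h : f ∈ Iline) : psi1 f = 0 := by
  rw [Iline_eq, Ideal.mem_span_singleton] at h
  obtain ⟨g, rfl⟩ := h
  rw [map_mul, psi1_G, zero_mul]

lemma psi2_Iline {f : R2} (h : f ∈ Iline) : psi2 f = 0 := by
  rw [Iline_eq, Ideal.mem_span_singleton] at h
  obtain ⟨g, rfl⟩ := h
  rw [map_mul, psi2_G, zero_mul]

lemma psi3_Iline {f : R2} (h : f ∈ Iline) : psi3 f = 0 := by
  rw [Iline_eq, Ideal.mem_span_singleton] at h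
  obtain ⟨g, rfl⟩ := h
  rw [map_mul, psi3_G, zero_mul]

noncomputable def phi1 : Aline →+* P1 :=
  Ideal.Quotient.lift Iline psi1.toRingHom (fun _ h => psi1_Iline h)
noncomputable def phi2 : Aline →+* P1 :=
  Ideal.Quotient.lift Iline psi2.toRingHom (fun _ h => psi2_Iline h)
noncomputable def phi3 : Aline →+* P1 :=
  Ideal.Quotient.lift Iline psi3.toRingHom (fun _ h => psi3_Iline h)

@[simp] lemma phi1_mk (f : R2) : phi1 (Ideal.Quotient.mk Iline f) = psi1 f := rfl
@[simp] lemma phi2_mk (f : R2) : phi2 (Ideal.Quotient.mk Iline f) = psi2 f := rfl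
@[simp] lemma phi3_mk (f : R2) : phi3 (Ideal.Quotient.mk Iline f) = psi3 f := rfl

lemma Aline_surj (a : Aline) : ∃ f : R2, Ideal.Quotient.mk Iline f = a :=
  Ideal.Quotient.mk_surjective a

lemma phi_eq_zero {a : Aline} (h1 : phi1 a = 0) (h2 : phi2 a = 0) (h3 : phi3 a = 0) :
    a = 0 := by
  obtain ⟨f, rfl⟩ := Aline_surj a
  rw [phi1_mk] at h1
  rw [phi2_mk] at h2
  rw [phi3_mk] at h3
  obtain ⟨g, rfl⟩ := X1_dvd_of_psi2 f h2
  rw [map_mul, psi1_X1] at h1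
  have h1' : psi1 g = 0 := by
    rcases mul_eq_zero.1 h1 with h | h
    · exact absurd h Polynomial.X_ne_zero
    · exact h
  obtain ⟨h, rfl⟩ := X0_dvd_of_psi1 g h1'
  rw [map_mul, map_mul, psi3_X0, psi3_X1] at h3
  have h3' : psi3 h = 0 := by
    rcases mul_eq_zero.1 h3 with h' | h'
    · exact absurd h' Polynomial.X_ne_zero
    · rcases mul_eq_zero.1 h' with h'' | h''
      · exact absurd h'' Polynomial.X_ne_zero
      · exact h''
  obtain ⟨k, rfl⟩ := X01_dvd_of_psi3 h h3'
  refine Ideal.Quotient.eq_zero_iff_mem.2 ?_; rw [Iline_eq, Ideal.mem_span_singleton]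
  exact ⟨k, by simp only [G]; ring⟩

lemma phi_inj {a b : Aline} (h1 : phi1 a = phi1 b) (h2 : phi2 a = phi2 b)
    (h3 : phi3 a = phi3 b) : a = b := by
  have := phi_eq_zero (a := a - b) (by rw [map_sub, h1, sub_self])
    (by rw [map_sub, h2, sub_self]) (by rw [map_sub, h3, sub_self])
  exact sub_eq_zero.1 this

lemma X_sq_ne_zero : (Polynomial.X * Polynomial.X : P1) ≠ 0 :=
  mul_ne_zero Polynomial.X_ne_zero Polynomial.X_ne_zero

lemma phi1_ne_zero_of_nzd (x : Aline) (hx : x ∈ nonZeroDivisors Aline) : phi1 x ≠ 0 := by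
  intro h
  obtain ⟨f, rfl⟩ := Aline_surj x
  rw [phi1_mk] at h
  obtain ⟨g, rfl⟩ := X0_dvd_of_psi1 f h
  have hw : (Ideal.Quotient.mk Iline (MvPolynomial.X 1 * (MvPolynomial.X 0 + MvPolynomial.X 1)))
      * (Ideal.Quotient.mk Iline (MvPolynomial.X 0 * g)) = 0 := by
    rw [← map_mul, Ideal.Quotient.eq_zero_iff_mem, Iline_eq, Ideal.mem_span_singleton]
    exact ⟨g, by simp only [G]; ring⟩
  have : (Ideal.Quotient.mk Iline _ : MvPolynomial (Fin 2) (ZMod 2) ⧸ Iline) = 0 :=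
    (mul_right_mem_nonZeroDivisors_eq_zero_iff hx).1 hw
  rw [Ideal.Quotient.eq_zero_iff_mem, Iline_eq, Ideal.mem_span_singleton] at this
  obtain ⟨u, hu⟩ := this
  have := congrArg psi1 hu
  simp only [map_mul, map_add, psi1_X1, psi1_X0, psi1_G, zero_mul, zero_add, add_zero, mul_zero] at this
  exact X_sq_ne_zero this

lemma phi2_ne_zero_of_nzd (x : Aline) (hx : x ∈ nonZeroDivisors Aline) : phi2 x ≠ 0 := by
  intro h
  obtain ⟨f, rfl⟩ := Aline_surj x
  rw [phi2_mk] at h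
  obtain ⟨g, rfl⟩ := X1_dvd_of_psi2 f h
  have hw : (Ideal.Quotient.mk Iline (MvPolynomial.X 0 * (MvPolynomial.X 0 + MvPolynomial.X 1)))
      * (Ideal.Quotient.mk Iline (MvPolynomial.X 1 * g)) = 0 := by
    rw [← map_mul, Ideal.Quotient.eq_zero_iff_mem, Iline_eq, Ideal.mem_span_singleton]
    exact ⟨g, by simp only [G]; ring⟩
  have : (Ideal.Quotient.mk Iline _ : MvPolynomial (Fin 2) (ZMod 2) ⧸ Iline) = 0 :=
    (mul_right_mem_nonZeroDivisors_eq_zero_iff hx).1 hw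
  rw [Ideal.Quotient.eq_zero_iff_mem, Iline_eq, Ideal.mem_span_singleton] at this
  obtain ⟨u, hu⟩ := this
  have := congrArg psi2 hu
  simp only [map_mul, map_add, psi2_X1, psi2_X0, psi2_G, zero_mul, zero_add, add_zero, mul_zero] at this
  exact X_sq_ne_zero this

lemma phi3_ne_zero_of_nzd (x : Aline) (hx : x ∈ nonZeroDivisors Aline) : phi3 x ≠ 0 := by
  intro h
  obtain ⟨f, rfl⟩ := Aline_surj x
  rw [phi3_mk] at h
  obtain ⟨g, rfl⟩ := X01_dvd_of_psi3 f h
  have hw : (Ideal.Quotient.mk Iline (MvPolynomial.X 0 * MvPolynomial.X 1))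
      * (Ideal.Quotient.mk Iline ((MvPolynomial.X 0 + MvPolynomial.X 1) * g)) = 0 := by
    rw [← map_mul, Ideal.Quotient.eq_zero_iff_mem, Iline_eq, Ideal.mem_span_singleton]
    exact ⟨g, by simp only [G]; ring⟩
  have : (Ideal.Quotient.mk Iline _ : MvPolynomial (Fin 2) (ZMod 2) ⧸ Iline) = 0 :=
    (mul_right_mem_nonZeroDivisors_eq_zero_iff hx).1 hw
  rw [Ideal.Quotient.eq_zero_iff_mem, Iline_eq, Ideal.mem_span_singleton] at this
  obtain ⟨u, hu⟩ := this
  have := congrArg psi3 hu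
  simp only [map_mul, map_add, psi3_X1, psi3_X0, psi3_G, zero_mul, zero_add, add_zero, mul_zero] at this
  exact X_sq_ne_zero this

/-- constant coefficients of the three branch images agree. -/
lemma c0_12 (a : Aline) : (phi1 a).coeff 0 = (phi2 a).coeff 0 := by
  obtain ⟨f, rfl⟩ := Aline_surj a
  rw [phi1_mk, phi2_mk, coeff_psi1_zero, coeff_psi2_zero]

lemma c0_13 (a : Aline) : (phi1 a).coeff 0 = (phi3 a).coeff 0 := by
  obtain ⟨f, rfl⟩ := Aline_surj a
  rw [phi1_mk, phi3_mk, coeff_psi1_zero, coeff_psi3_zero]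

/-- sum of the linear coefficients of the three branch images vanishes. -/
lemma c1_sum (a : Aline) :
    (phi1 a).coeff 1 + (phi2 a).coeff 1 + (phi3 a).coeff 1 = 0 := by
  obtain ⟨f, rfl⟩ := Aline_surj a
  rw [phi1_mk, phi2_mk, phi3_mk]
  exact coeff_one_sum f

lemma add_self_P1 (a : P1) : a + a = 0 := CharTwo.add_self_eq_zero a

lemma psi_aeval0 (ψ : R2 →ₐ[ZMod 2] P1) (t : R2) (ht : ψ t = 0) (q : P1) :
    ψ (Polynomial.aeval t q) = Polynomial.C (q.coeff 0) := by
  rw [← Polynomial.aeval_algHom_apply, ht, Polynomial.aeval_def, Polynomial.eval₂_at_zero,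
    Polynomial.algebraMap_eq]

lemma psi_aevalX (ψ : R2 →ₐ[ZMod 2] P1) (t : R2) (ht : ψ t = Polynomial.X) (q : P1) :
    ψ (Polynomial.aeval t q) = q := by
  rw [← Polynomial.aeval_algHom_apply, ht, Polynomial.aeval_X_left_apply]

lemma psi_C (ψ : R2 →ₐ[ZMod 2] P1) (c : ZMod 2) :
    ψ (MvPolynomial.C c) = Polynomial.C c := by
  rw [← MvPolynomial.algebraMap_eq, AlgHom.commutes, Polynomial.algebraMap_eq]

/-- Conversely, any triple of polynomials satisfying the two conditions lifts to `Aline`. -/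
lemma exists_lift (p q r : P1) (h12 : p.coeff 0 = q.coeff 0) (h13 : p.coeff 0 = r.coeff 0)
    (h1 : p.coeff 1 + q.coeff 1 + r.coeff 1 = 0) :
    ∃ b : Aline, phi1 b = p ∧ phi2 b = q ∧ phi3 b = r := by
  have hD0 : (r + q + p + Polynomial.C (p.coeff 0)).coeff 0 = 0 := by
    simp only [Polynomial.coeff_add, Polynomial.coeff_C_zero]
    rw [← h12, ← h13]
    calc p.coeff 0 + p.coeff 0 + p.coeff 0 + p.coeff 0
        = (p.coeff 0 + p.coeff 0) + (p.coeff 0 + p.coeff 0) := by ring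
      _ = 0 := by simp [CharTwo.add_self_eq_zero]
  have hD1 : (r + q + p + Polynomial.C (p.coeff 0)).coeff 1 = 0 := by
    have hc : (Polynomial.C (p.coeff 0)).coeff 1 = 0 := by simp [Polynomial.coeff_C]
    simp only [Polynomial.coeff_add, hc, add_zero]
    linear_combination h1
  obtain ⟨g, hg⟩ : (Polynomial.X : P1)^2 ∣ (r + q + p + Polynomial.C (p.coeff 0)) := by
    rw [Polynomial.X_pow_dvd_iff]
    intro d hd
    interval_cases d
    · exact hD0
    · exact hD1
  set F : R2 := Polynomial.aeval (MvPolynomial.X 0) q + Polynomial.aeval (MvPolynomial.X 1) p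
    + MvPolynomial.C (p.coeff 0)
    + MvPolynomial.X 0 * MvPolynomial.X 1 * Polynomial.aeval (MvPolynomial.X 0) g with hF
  refine ⟨Ideal.Quotient.mk Iline F, ?_, ?_, ?_⟩
  · rw [phi1_mk, hF]
    simp only [map_add, map_mul, psi1_X0, psi1_X1,
      psi_aeval0 psi1 _ psi1_X0, psi_aevalX psi1 _ psi1_X1, psi_C]
    rw [← h12]
    calc Polynomial.C (p.coeff 0) + p + Polynomial.C (p.coeff 0)
        + 0 * Polynomial.X * Polynomial.C (g.coeff 0)
        = p + (Polynomial.C (p.coeff 0) + Polynomial.C (p.coeff 0)) := by ring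
      _ = p := by simp [CharTwo.add_self_eq_zero]
  · rw [phi2_mk, hF]
    simp only [map_add, map_mul, psi2_X0, psi2_X1,
      psi_aeval0 psi2 _ psi2_X1, psi_aevalX psi2 _ psi2_X0, psi_C]
    calc q + Polynomial.C (p.coeff 0) + Polynomial.C (p.coeff 0)
        + Polynomial.X * 0 * g
        = q + (Polynomial.C (p.coeff 0) + Polynomial.C (p.coeff 0)) := by ring
      _ = q := by simp [CharTwo.add_self_eq_zero]
  · rw [phi3_mk, hF]
    simp only [map_add, map_mul, psi3_X0, psi3_X1,
      psi_aevalX psi3 _ psi3_X0, psi_aevalX psi3 _ psi3_X1, psi_C]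
    have hg' : Polynomial.X * Polynomial.X * g = r + q + p + Polynomial.C (p.coeff 0) := by
      rw [hg]; ring
    rw [hg']
    calc q + p + Polynomial.C (p.coeff 0) + (r + q + p + Polynomial.C (p.coeff 0))
        = r + ((q + p + Polynomial.C (p.coeff 0)) + (q + p + Polynomial.C (p.coeff 0))) := by
          ring
      _ = r := by simp [CharTwo.add_self_eq_zero]

/-- divisibility from a scaled-roots equation, via integral closedness of `P1`. -/
lemma dvd_of_scaleRoots (P : Polynomial P1) (hP : P.Monic) (Xp Yp : P1) (hX : Xp ≠ 0)
    (h : Polynomial.eval Yp (P.scaleRoots Xp) = 0) : Xp ∣ Yp := by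
  set K := FractionRing P1
  have hXK : algebraMap P1 K Xp ≠ 0 := by
    simpa using (map_ne_zero_iff _ (IsFractionRing.injective P1 K)).2 hX
  set t : K := algebraMap P1 K Yp / algebraMap P1 K Xp with ht
  have hmul : algebraMap P1 K Xp * t = algebraMap P1 K Yp := mul_div_cancel₀ _ hXK
  have heval : Polynomial.eval₂ (algebraMap P1 K) (algebraMap P1 K Xp * t) (P.scaleRoots Xp)
      = 0 := by
    rw [hmul, Polynomial.eval₂_hom, h, map_zero]
  rw [Polynomial.scaleRoots_eval₂_mul] at heval
  have ht0 : Polynomial.eval₂ (algebraMap P1 K) t P = 0 := by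
    rcases mul_eq_zero.1 heval with h' | h'
    · exact absurd h' (pow_ne_zero _ hXK)
    · exact h'
  have hint : IsIntegral P1 t := ⟨P, hP, ht0⟩
  obtain ⟨u, hu⟩ := IsIntegrallyClosed.isIntegral_iff.1 hint
  refine ⟨u, ?_⟩
  apply IsFractionRing.injective P1 K
  rw [map_mul, hu, hmul]
lemma coeff_one_mul (a b : P1) :
    (a * b).coeff 1 = a.coeff 0 * b.coeff 1 + a.coeff 1 * b.coeff 0 := by
  rw [Polynomial.coeff_mul]
  have : Finset.HasAntidiagonal.antidiagonal (1 : ℕ) = {(0, 1), (1, 0)} := rfl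
  rw [this]
  simp

lemma zmod2_cases (a : ZMod 2) : a = 0 ∨ a = 1 := by revert a; decide

lemma arith_zero : ∀ x1 x2 x3 u1 u2 u3 v1 v2 v3 : ZMod 2,
    x1 + x2 + x3 = 0 → x1 * u1 + x2 * u2 + x3 * u3 = 0 → x1 * v1 + x2 * v2 + x3 * v3 = 0 →
    x1 * (u1 * v1) + x2 * (u2 * v2) + x3 * (u3 * v3) = 0 := by decide

lemma arith_one : ∀ x1 x2 x3 u u1 u2 u3 v v1 v2 v3 : ZMod 2,
    x1 + x2 + x3 = 0 →
    (x1 * u + u1) + (x2 * u + u2) + (x3 * u + u3) = 0 →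
    (x1 * v + v1) + (x2 * v + v2) + (x3 * v + v3) = 0 →
    (x1 * (u * v) + (u * v1 + u1 * v)) + (x2 * (u * v) + (u * v2 + u2 * v))
      + (x3 * (u * v) + (u * v3 + u3 * v)) = 0 := by decide
lemma arith_one' : ∀ a1 a2 a3 p q1 q2 q3 r s1 s2 s3 : ZMod 2,
    a1 + a2 + a3 = 0 →
    ((q1 + a1 * p) + (q2 + a2 * p) + (q3 + a3 * p) = 0) →
    ((s1 + a1 * r) + (s2 + a2 * r) + (s3 + a3 * r) = 0) →
    (((p * s1 + q1 * r) + a1 * (p * r)) + ((p * s2 + q2 * r) + a2 * (p * r))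
      + ((p * s3 + q3 * r) + a3 * (p * r)) = 0) := by decide

lemma arith_main (ξ a1 a2 a3 p1 q1 p2 q2 p3 q3 r1 s1 r2 s2 r3 s3 : ZMod 2)
    (ha : a1 + a2 + a3 = 0)
    (hu0a : ξ * p1 = ξ * p2) (hu0b : ξ * p1 = ξ * p3)
    (hu1 : (ξ * q1 + a1 * p1) + (ξ * q2 + a2 * p2) + (ξ * q3 + a3 * p3) = 0)
    (hv0a : ξ * r1 = ξ * r2) (hv0b : ξ * r1 = ξ * r3)
    (hv1 : (ξ * s1 + a1 * r1) + (ξ * s2 + a2 * r2) + (ξ * s3 + a3 * r3) = 0) :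
    (ξ * (p1 * r1) = ξ * (p2 * r2)) ∧ (ξ * (p1 * r1) = ξ * (p3 * r3)) ∧
    ((ξ * (p1 * s1 + q1 * r1) + a1 * (p1 * r1)) + (ξ * (p2 * s2 + q2 * r2) + a2 * (p2 * r2))
      + (ξ * (p3 * s3 + q3 * r3) + a3 * (p3 * r3)) = 0) := by
  rcases zmod2_cases ξ with h | h
  · subst h
    simp only [zero_mul, zero_add] at hu1 hv1
    exact ⟨by rw [zero_mul, zero_mul], by rw [zero_mul, zero_mul],
      by simpa only [zero_mul, zero_add] using arith_zero a1 a2 a3 p1 p2 p3 r1 r2 r3 ha hu1 hv1⟩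
  · subst h
    simp only [one_mul] at hu0a hu0b hv0a hv0b hu1 hv1 ⊢
    subst hu0a; subst hu0b; subst hv0a; subst hv0b
    exact ⟨rfl, rfl, arith_one' a1 a2 a3 p1 q1 q2 q3 r1 s1 s2 s3 ha hu1 hv1⟩

/-- From integrality of `y/x` we get branchwise divisibility. -/
lemma branch_dvd (x : nonZeroDivisors Aline) (y : Aline)
    (hy : IsIntegral Aline (IsLocalization.mk' (Localization (nonZeroDivisors Aline)) y x)) :
    ((phi1 (x : Aline)) ∣ phi1 y) ∧ ((phi2 (x : Aline)) ∣ phi2 y)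
      ∧ ((phi3 (x : Aline)) ∣ phi3 y) := by
  obtain ⟨p, hp, hp0⟩ := hy
  have haev : Polynomial.aeval
      (IsLocalization.mk' (Localization (nonZeroDivisors Aline)) y x) p = 0 := by
    rw [Polynomial.aeval_def]; exact hp0
  have h1 := scaleRoots_aeval_eq_zero_of_aeval_mk'_eq_zero
    (S := Localization (nonZeroDivisors Aline)) haev
  rw [Polynomial.aeval_algebraMap_apply] at h1
  have h2 : Polynomial.aeval y (p.scaleRoots (x : Aline)) = 0 := by
    apply IsLocalization.injective (Localization (nonZeroDivisors Aline)) le_rfl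
    rw [h1, map_zero]
  have h2' : Polynomial.eval y (p.scaleRoots (x : Aline)) = 0 := by
    rwa [← Polynomial.coe_aeval_eq_eval]
  have hlead : ∀ φ : Aline →+* P1, φ p.leadingCoeff ≠ 0 := by
    intro φ
    rw [hp.leadingCoeff, map_one]
    exact one_ne_zero
  refine ⟨?_, ?_, ?_⟩
  · apply dvd_of_scaleRoots (p.map phi1) (hp.map _) _ _
      (phi1_ne_zero_of_nzd _ x.2)
    rw [← Polynomial.map_scaleRoots _ _ _ (hlead phi1), Polynomial.eval_map,
      Polynomial.eval₂_hom, h2', map_zero]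
  · apply dvd_of_scaleRoots (p.map phi2) (hp.map _) _ _
      (phi2_ne_zero_of_nzd _ x.2)
    rw [← Polynomial.map_scaleRoots _ _ _ (hlead phi2), Polynomial.eval_map,
      Polynomial.eval₂_hom, h2', map_zero]
  · apply dvd_of_scaleRoots (p.map phi3) (hp.map _) _ _
      (phi3_ne_zero_of_nzd _ x.2)
    rw [← Polynomial.map_scaleRoots _ _ _ (hlead phi3), Polynomial.eval_map,
      Polynomial.eval₂_hom, h2', map_zero]

lemma isWeaklyArf_Aline : IsWeaklyArf Aline := by
  intro x y z hy hz
  obtain ⟨⟨u1, hu1⟩, ⟨u2, hu2⟩, ⟨u3, hu3⟩⟩ := branch_dvd x y hy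
  obtain ⟨⟨v1, hv1⟩, ⟨v2, hv2⟩, ⟨v3, hv3⟩⟩ := branch_dvd x z hz
  set ξ := (phi1 (x : Aline)).coeff 0 with hξ
  have ex2 : (phi2 (x : Aline)).coeff 0 = ξ := (c0_12 _).symm
  have ex3 : (phi3 (x : Aline)).coeff 0 = ξ := (c0_13 _).symm
  have cy0_1 : (phi1 y).coeff 0 = ξ * u1.coeff 0 := by
    rw [hu1, Polynomial.mul_coeff_zero]
  have cy0_2 : (phi2 y).coeff 0 = ξ * u2.coeff 0 := by
    rw [hu2, Polynomial.mul_coeff_zero, ex2]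
  have cy0_3 : (phi3 y).coeff 0 = ξ * u3.coeff 0 := by
    rw [hu3, Polynomial.mul_coeff_zero, ex3]
  have cz0_1 : (phi1 z).coeff 0 = ξ * v1.coeff 0 := by
    rw [hv1, Polynomial.mul_coeff_zero]
  have cz0_2 : (phi2 z).coeff 0 = ξ * v2.coeff 0 := by
    rw [hv2, Polynomial.mul_coeff_zero, ex2]
  have cz0_3 : (phi3 z).coeff 0 = ξ * v3.coeff 0 := by
    rw [hv3, Polynomial.mul_coeff_zero, ex3]
  have cy1_1 : (phi1 y).coeff 1 = ξ * u1.coeff 1 + (phi1 (x:Aline)).coeff 1 * u1.coeff 0 := by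
    rw [hu1, coeff_one_mul]
  have cy1_2 : (phi2 y).coeff 1 = ξ * u2.coeff 1 + (phi2 (x:Aline)).coeff 1 * u2.coeff 0 := by
    rw [hu2, coeff_one_mul, ex2]
  have cy1_3 : (phi3 y).coeff 1 = ξ * u3.coeff 1 + (phi3 (x:Aline)).coeff 1 * u3.coeff 0 := by
    rw [hu3, coeff_one_mul, ex3]
  have cz1_1 : (phi1 z).coeff 1 = ξ * v1.coeff 1 + (phi1 (x:Aline)).coeff 1 * v1.coeff 0 := by
    rw [hv1, coeff_one_mul]
  have cz1_2 : (phi2 z).coeff 1 = ξ * v2.coeff 1 + (phi2 (x:Aline)).coeff 1 * v2.coeff 0 := by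
    rw [hv2, coeff_one_mul, ex2]
  have cz1_3 : (phi3 z).coeff 1 = ξ * v3.coeff 1 + (phi3 (x:Aline)).coeff 1 * v3.coeff 0 := by
    rw [hv3, coeff_one_mul, ex3]
  obtain ⟨g0a, g0b, g1⟩ := arith_main ξ
    ((phi1 (x:Aline)).coeff 1) ((phi2 (x:Aline)).coeff 1) ((phi3 (x:Aline)).coeff 1)
    (u1.coeff 0) (u1.coeff 1) (u2.coeff 0) (u2.coeff 1) (u3.coeff 0) (u3.coeff 1)
    (v1.coeff 0) (v1.coeff 1) (v2.coeff 0) (v2.coeff 1) (v3.coeff 0) (v3.coeff 1)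
    (c1_sum (x : Aline))
    (by rw [← cy0_1, ← cy0_2]; exact c0_12 y)
    (by rw [← cy0_1, ← cy0_3]; exact c0_13 y)
    (by rw [← cy1_1, ← cy1_2, ← cy1_3]; exact c1_sum y)
    (by rw [← cz0_1, ← cz0_2]; exact c0_12 z)
    (by rw [← cz0_1, ← cz0_3]; exact c0_13 z)
    (by rw [← cz1_1, ← cz1_2, ← cz1_3]; exact c1_sum z)
  obtain ⟨b, hb1, hb2, hb3⟩ := exists_lift
    (phi1 (x:Aline) * (u1 * v1)) (phi2 (x:Aline) * (u2 * v2)) (phi3 (x:Aline) * (u3 * v3))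
    (by simp only [Polynomial.mul_coeff_zero, ex2, ← hξ]; linear_combination g0a)
    (by simp only [Polynomial.mul_coeff_zero, ex3, ← hξ]; linear_combination g0b)
    (by simp only [coeff_one_mul, Polynomial.mul_coeff_zero, ex2, ex3, ← hξ]
        linear_combination g1)
  have hxb : (x : Aline) * b = y * z := by
    apply phi_inj
    · rw [map_mul, map_mul, hb1, hu1, hv1]; ring
    · rw [map_mul, map_mul, hb2, hu2, hv2]; ring
    · rw [map_mul, map_mul, hb3, hu3, hv3]; ring
  refine ⟨b, ?_⟩
  rw [IsLocalization.eq_mk'_iff_mul_eq, ← map_mul]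
  congr 1
  rw [mul_comm] at hxb
  exact hxb
/-! ### Part 2: the strict closure -/

noncomputable def e1 : Abar := (1, 0, 0)
noncomputable def e2 : Abar := (0, 1, 0)
noncomputable def alphaA : Abar := (Ideal.Quotient.mk (Ideal.span {xA}) yA, 0, 0)

lemma AtoAbar_apply (a : Aline) :
    AtoAbar a = (Ideal.Quotient.mk (Ideal.span {xA}) a,
      Ideal.Quotient.mk (Ideal.span {yA}) a, Ideal.Quotient.mk (Ideal.span {xA + yA}) a) := rfl

lemma hxe1 : AtoAbar xA * e1 = 0 := by
  rw [AtoAbar_apply, e1]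
  have h1 : Ideal.Quotient.mk (Ideal.span {xA}) xA = 0 := by
    rw [Ideal.Quotient.eq_zero_iff_mem]
    exact Ideal.subset_span rfl
  ext <;> simp [h1]

lemma halpha : AtoAbar yA * e1 = alphaA := by
  rw [AtoAbar_apply, e1, alphaA]
  ext <;> simp

lemma hrel : AtoAbar xA + AtoAbar yA = AtoAbar yA * e1 + AtoAbar xA * e2 := by
  rw [AtoAbar_apply, AtoAbar_apply, e1, e2]
  have h1 : Ideal.Quotient.mk (Ideal.span {xA}) xA = 0 := by
    rw [Ideal.Quotient.eq_zero_iff_mem]; exact Ideal.subset_span rfl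
  have h2 : Ideal.Quotient.mk (Ideal.span {yA}) yA = 0 := by
    rw [Ideal.Quotient.eq_zero_iff_mem]; exact Ideal.subset_span rfl
  have h3 : Ideal.Quotient.mk (Ideal.span {xA + yA}) xA
      + Ideal.Quotient.mk (Ideal.span {xA + yA}) yA = 0 := by
    rw [← map_add, Ideal.Quotient.eq_zero_iff_mem]
    exact Ideal.subset_span rfl
  ext
  · simp [h1]
  · simp [h2]
  · simp [h3]

lemma phi1_xA : phi1 xA = 0 := by simp only [xA, phi1_mk, psi1_X0]
lemma phi2_xA : phi2 xA = Polynomial.X := by simp only [xA, phi2_mk, psi2_X0]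
lemma phi3_xA : phi3 xA = Polynomial.X := by simp only [xA, phi3_mk, psi3_X0]
lemma phi1_yA : phi1 yA = Polynomial.X := by simp only [yA, phi1_mk, psi1_X1]
lemma phi2_yA : phi2 yA = 0 := by simp only [yA, phi2_mk, psi2_X1]
lemma phi3_yA : phi3 yA = Polynomial.X := by simp only [yA, phi3_mk, psi3_X1]

lemma alpha_not_in_range (a : Aline) : AtoAbar a ≠ alphaA := by
  intro h
  rw [AtoAbar_apply, alphaA, Prod.mk.injEq, Prod.mk.injEq] at h
  obtain ⟨h1, h2, h3⟩ := h
  -- from h1 : a ≡ yA mod (xA)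
  have h1' : a - yA ∈ Ideal.span {xA} := Ideal.Quotient.eq.1 h1
  rw [Ideal.mem_span_singleton] at h1'
  obtain ⟨e, he⟩ := h1'
  have ha : a = yA + xA * e := by linear_combination he
  -- from h2 : a ∈ (yA)
  have h2' : a ∈ Ideal.span {yA} := Ideal.Quotient.eq_zero_iff_mem.1 h2
  rw [Ideal.mem_span_singleton] at h2'
  obtain ⟨c, hc⟩ := h2'
  -- from h3 : a ∈ (xA + yA)
  have h3' : a ∈ Ideal.span {xA + yA} := Ideal.Quotient.eq_zero_iff_mem.1 h3
  rw [Ideal.mem_span_singleton] at h3'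
  obtain ⟨d, hd⟩ := h3'
  have e1v : phi1 a = Polynomial.X := by
    rw [ha, map_add, map_mul, phi1_yA, phi1_xA, zero_mul, add_zero]
  have e2v : phi2 a = 0 := by
    rw [hc, map_mul, phi2_yA, zero_mul]
  have e3v : phi3 a = 0 := by
    rw [hd, map_mul, map_add, phi3_xA, phi3_yA, CharTwo.add_self_eq_zero, zero_mul]
  have := c1_sum a
  rw [e1v, e2v, e3v, Polynomial.coeff_X_one, Polynomial.coeff_zero, add_zero, add_zero] at this
  exact one_ne_zero this

end WA

/-- `A = (ℤ/(2))[X,Y]/(XY(X+Y))` is a weakly Arf ring (so its weakly Arf closure is `A`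
itself), but `A` is not strictly closed: the strict closure of `A` in its integral closure
`Ā` strictly contains `A`. -/
theorem weaklyArf_but_not_strictlyClosed_three_lines :
    letI : Algebra Aline Abar := AtoAbar.toAlgebra
    IsWeaklyArf Aline ∧
    Set.range (algebraMap Aline Abar) ⊂ strictClosure Aline Abar := by
  letI : Algebra Aline Abar := AtoAbar.toAlgebra
  refine ⟨WA.isWeaklyArf_Aline, ?_⟩
  have hs : ∀ (r : Aline) (m : Abar), r • m = AtoAbar r * m := fun r m => by
    rfl
  have hsub : Set.range (algebraMap Aline Abar) ⊆ strictClosure Aline Abar := by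
    rintro s ⟨a, rfl⟩
    show (algebraMap Aline Abar a) ⊗ₜ[Aline] (1 : Abar) = (1 : Abar) ⊗ₜ[Aline] _
    rw [Algebra.algebraMap_eq_smul_one]
    exact TensorProduct.smul_tmul a 1 1
  have h1 : yA • WA.e1 = WA.alphaA := by rw [hs]; exact WA.halpha
  have h0 : xA • WA.e1 = 0 := by rw [hs]; exact WA.hxe1
  have hrel2 : AtoAbar yA = yA • WA.e1 + xA • WA.e2 - AtoAbar xA := by
    rw [hs, hs]; linear_combination WA.hrel
  have hmem : WA.alphaA ∈ strictClosure Aline Abar := by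
    show WA.alphaA ⊗ₜ[Aline] (1 : Abar) = (1 : Abar) ⊗ₜ[Aline] WA.alphaA
    have et3 : WA.e1 ⊗ₜ[Aline] (AtoAbar xA) = (xA • WA.e1) ⊗ₜ[Aline] (1 : Abar) := by
      rw [TensorProduct.smul_tmul]
      congr 1
      rw [hs, mul_one]
    have et3' : (AtoAbar xA) ⊗ₜ[Aline] WA.e1 = (1 : Abar) ⊗ₜ[Aline] (xA • WA.e1) := by
      rw [← TensorProduct.smul_tmul]
      congr 1
      rw [hs, mul_one]
    have lhs : WA.alphaA ⊗ₜ[Aline] (1 : Abar) = WA.alphaA ⊗ₜ[Aline] WA.e1 := by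
      calc WA.alphaA ⊗ₜ[Aline] (1 : Abar)
          = (yA • WA.e1) ⊗ₜ[Aline] (1 : Abar) := by rw [h1]
        _ = WA.e1 ⊗ₜ[Aline] (yA • (1 : Abar)) := TensorProduct.smul_tmul _ _ _
        _ = WA.e1 ⊗ₜ[Aline] (AtoAbar yA) := by rw [hs, mul_one]
        _ = WA.e1 ⊗ₜ[Aline] (yA • WA.e1) + WA.e1 ⊗ₜ[Aline] (xA • WA.e2)
            - WA.e1 ⊗ₜ[Aline] (AtoAbar xA) := by
              rw [hrel2, TensorProduct.tmul_sub, TensorProduct.tmul_add]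
        _ = (yA • WA.e1) ⊗ₜ[Aline] WA.e1 + (xA • WA.e1) ⊗ₜ[Aline] WA.e2
            - (xA • WA.e1) ⊗ₜ[Aline] (1 : Abar) := by
              rw [← TensorProduct.smul_tmul, ← TensorProduct.smul_tmul xA WA.e1 WA.e2, et3]
        _ = WA.alphaA ⊗ₜ[Aline] WA.e1 := by
              rw [h1, h0, TensorProduct.zero_tmul, TensorProduct.zero_tmul, add_zero, sub_zero]
    have rhs : (1 : Abar) ⊗ₜ[Aline] WA.alphaA = WA.alphaA ⊗ₜ[Aline] WA.e1 := by
      calc (1 : Abar) ⊗ₜ[Aline] WA.alphaA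
          = (1 : Abar) ⊗ₜ[Aline] (yA • WA.e1) := by rw [h1]
        _ = (yA • (1 : Abar)) ⊗ₜ[Aline] WA.e1 := (TensorProduct.smul_tmul _ _ _).symm
        _ = (AtoAbar yA) ⊗ₜ[Aline] WA.e1 := by rw [hs, mul_one]
        _ = (yA • WA.e1) ⊗ₜ[Aline] WA.e1 + (xA • WA.e2) ⊗ₜ[Aline] WA.e1
            - (AtoAbar xA) ⊗ₜ[Aline] WA.e1 := by
              rw [hrel2, TensorProduct.sub_tmul, TensorProduct.add_tmul]
        _ = (yA • WA.e1) ⊗ₜ[Aline] WA.e1 + WA.e2 ⊗ₜ[Aline] (xA • WA.e1)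
            - (1 : Abar) ⊗ₜ[Aline] (xA • WA.e1) := by
              rw [TensorProduct.smul_tmul xA WA.e2 WA.e1, et3']
        _ = WA.alphaA ⊗ₜ[Aline] WA.e1 := by
              rw [h1, h0, TensorProduct.tmul_zero, TensorProduct.tmul_zero, add_zero, sub_zero]
    rw [lhs, rhs]
  rw [Set.ssubset_def]
  refine ⟨hsub, fun hba => ?_⟩
  obtain ⟨a, ha⟩ := hba hmem
  exact WA.alpha_not_in_range a ha
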